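/- For a symmetric bilinear form h on an n-dimensional inner product space with metric g and any integer p ≥ 1, F_h(g^p) = 2p·g^{p-1}·h, where powers and products are taken in the ring of double forms. -/

import Mathlib

open scoped BigOperators
open scoped Classical

noncomputable section

/-- A `(p,q)`-double form on `ℝⁿ`, given by its components with respect to the
standard orthonormal basis: a scalar-valued function of a row multi-index and a
column multi-index. -/
def DForm (n p q : ℕ) : Type := (Fin p → Fin n) → (Fin q → Fin n) → ℝ

namespace DForm

variable {n : ℕ}

/-- Transport a double form along equalities of the bidegrees. -/
def cast' {p q p' q' : ℕ} (hp : p = p') (hq : q = q') (ω : DForm n p q) :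
    DForm n p' q' :=
  fun I J => ω (fun a => I (Fin.cast hp a)) (fun b => J (Fin.cast hq b))

/-- A double form is alternating in each of its two blocks of arguments. -/
def IsAlt {p q : ℕ} (ω : DForm n p q) : Prop :=
  (∀ (σ : Equiv.Perm (Fin p)) (I : Fin p → Fin n) (J : Fin q → Fin n),
      ω (I ∘ σ) J = ((Equiv.Perm.sign σ : ℤ) : ℝ) * ω I J) ∧
  (∀ (τ : Equiv.Perm (Fin q)) (I : Fin p → Fin n) (J : Fin q → Fin n),
      ω I (J ∘ τ) = ((Equiv.Perm.sign τ : ℤ) : ℝ) * ω I J) ∧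
  (∀ (I : Fin p → Fin n) (J : Fin q → Fin n),
      (¬ Function.Injective I ∨ ¬ Function.Injective J) → ω I J = 0)

/-- A `(p,p)`-double form is symmetric. -/
def IsSym {p : ℕ} (ω : DForm n p p) : Prop := ∀ I J, ω I J = ω J I

/-- The exterior (Kulkarni–Nomizu type) product of double forms:
`(α₁⊗β₁)·(α₂⊗β₂) = (α₁∧α₂)⊗(β₁∧β₂)` in components. -/
def mul {p q r s : ℕ} (ω : DForm n p q) (θ : DForm n r s) :
    DForm n (p + r) (q + s) :=
  fun I J =>
    (((p.factorial * r.factorial * q.factorial * s.factorial : ℕ) : ℝ))⁻¹ *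
      ∑ σ : Equiv.Perm (Fin (p + r)), ∑ τ : Equiv.Perm (Fin (q + s)),
        ((Equiv.Perm.sign σ : ℤ) : ℝ) * ((Equiv.Perm.sign τ : ℤ) : ℝ) *
          ω (fun a => I (σ (Fin.castAdd r a))) (fun b => J (τ (Fin.castAdd s b))) *
          θ (fun a => I (σ (Fin.natAdd p a))) (fun b => J (τ (Fin.natAdd q b)))

/-- The contraction map `c : D^{p+1,q+1} → D^{p,q}` (trace over the orthonormal
basis in the first slot of each block). -/
def contr {p q : ℕ} (ω : DForm n (p + 1) (q + 1)) : DForm n p q :=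
  fun I J => ∑ i : Fin n, ω (Fin.cons i I) (Fin.cons i J)

/-- Total version of the contraction (zero when a bidegree is `0`). -/
def contr' : {p q : ℕ} → DForm n p q → DForm n (p - 1) (q - 1)
  | _ + 1, _ + 1, ω => contr ω
  | 0, _, _ => fun _ _ => 0
  | _ + 1, 0, _ => fun _ _ => 0

/-- Iterated contraction `c^k : D^{p+k,q+k} → D^{p,q}`. -/
def cIter {p q : ℕ} : (k : ℕ) → DForm n (p + k) (q + k) → DForm n p q
  | 0, ω => ω
  | k + 1, ω => cIter k (contr ω)

/-- The full contraction `c^p` of a `(p,p)`-double form, a scalar. -/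
def fullc {p : ℕ} (ω : DForm n p p) : ℝ :=
  cIter (p := 0) (q := 0) p
    (cast' (Nat.zero_add p).symm (Nat.zero_add p).symm ω) Fin.elim0 Fin.elim0

/-- The metric of `ℝⁿ` as a `(1,1)`-double form. -/
def gd : DForm n 1 1 := fun I J => if I 0 = J 0 then 1 else 0

/-- Powers `g^p` of the metric in the ring of double forms. -/
def gpow : (p : ℕ) → DForm n p p
  | 0 => fun _ _ => 1
  | p + 1 => mul (gpow p) gd

/-- Powers `ω^k` of a `(p,p)`-double form in the ring of double forms. -/
def pow {p : ℕ} (ω : DForm n p p) : (k : ℕ) → DForm n (p * k) (p * k)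
  | 0 => fun _ _ => 1
  | k + 1 => mul (pow ω k) ω

/-- The natural pointwise inner product on `(p,q)`-double forms. -/
def innerPQ {p q : ℕ} (ω θ : DForm n p q) : ℝ :=
  (((p.factorial * q.factorial : ℕ) : ℝ))⁻¹ *
    ∑ I : Fin p → Fin n, ∑ J : Fin q → Fin n, ω I J * θ I J

/-- The sign of the permutation of `{1,…,n}` obtained by concatenating the
multi-indices `K` and `I` (zero if it is not a permutation). -/
def epsSign {p : ℕ} (hp : p ≤ n) (K : Fin p → Fin n) (I : Fin (n - p) → Fin n) : ℝ :=
  if h : Function.Bijective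
      (fun a : Fin n => Fin.append K I (Fin.cast (by omega) a)) then
    ((Equiv.Perm.sign (Equiv.ofBijective _ h) : ℤ) : ℝ)
  else 0

/-- The generalized Hodge star operator on double forms, acting as the usual
Hodge star on each factor. -/
def hstar {p q : ℕ} (hp : p ≤ n) (hq : q ≤ n) (ω : DForm n p q) :
    DForm n (n - p) (n - q) :=
  fun I J =>
    (((p.factorial * q.factorial : ℕ) : ℝ))⁻¹ *
      ∑ K : Fin p → Fin n, ∑ L : Fin q → Fin n,
        epsSign hp K I * epsSign hq L J * ω K L

/-- The operator `F_h` associated with a symmetric bilinear form `h`: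
in an orthonormal basis diagonalizing `h` it multiplies the `(I,J)` component by
the sum of the eigenvalues of `h` over the indices in `I` and `J`.
Coordinate-free version: insert the endomorphism of `h` in each slot. -/
def Fh {p q : ℕ} (h : Fin n → Fin n → ℝ) (ω : DForm n p q) : DForm n p q :=
  fun I J =>
    (∑ k : Fin p, ∑ i : Fin n, h (I k) i * ω (Function.update I k i) J) +
    (∑ k : Fin q, ∑ i : Fin n, h (J k) i * ω I (Function.update J k i))

/-- A bilinear form on `ℝⁿ` viewed as a `(1,1)`-double form. -/
def ofBilin (h : Fin n → Fin n → ℝ) : DForm n 1 1 := fun I J => h (I 0) (J 0)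

/-- The first Bianchi identity for a `(2,2)`-double form. -/
def Bianchi1 (R : DForm n 2 2) : Prop :=
  ∀ x y z u : Fin n,
    R ![x, y] ![z, u] + R ![y, z] ![x, u] + R ![z, x] ![y, u] = 0

end DForm

end

noncomputable section Aux
open Equiv Finset

namespace DFormAux

variable {n : ℕ}

def sg {α : Type*} [DecidableEq α] [Fintype α] (σ : Perm α) : ℝ :=
  ((Equiv.Perm.sign σ : ℤ) : ℝ)

lemma sg_eq {α : Type*} [DecidableEq α] [Fintype α] (σ : Perm α) :
    ((Equiv.Perm.sign σ : ℤ) : ℝ) = sg σ := rfl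

lemma sg_sq {α : Type*} [DecidableEq α] [Fintype α] (π : Perm α) :
    sg π * sg π = 1 := by
  rw [sg, ← Int.cast_mul, ← Units.val_mul, Int.units_mul_self]; norm_num

lemma sg_mul {α : Type*} [DecidableEq α] [Fintype α] (σ τ : Perm α) :
    sg (σ * τ) = sg σ * sg τ := by
  rw [sg, Equiv.Perm.sign_mul]; push_cast; rfl

lemma sg_inv {α : Type*} [DecidableEq α] [Fintype α] (σ : Perm α) :
    sg σ⁻¹ = sg σ := by
  rw [sg, Equiv.Perm.sign_inv]; rfl

lemma sum_sign_mulRight {α : Type*} [DecidableEq α] [Fintype α] (π : Perm α) (H : Perm α → ℝ) :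
    ∑ σ : Perm α, sg σ * H (σ * π) = sg π * ∑ σ : Perm α, sg σ * H σ := by
  rw [Finset.mul_sum]
  rw [← Equiv.sum_comp (Equiv.mulRight π) (fun σ => sg π * (sg σ * H σ))]
  refine Finset.sum_congr rfl fun σ _ => ?_
  simp only [Equiv.coe_mulRight, sg_mul]
  have h2 := sg_sq π
  calc sg σ * H (σ * π) = (sg π * sg π) * (sg σ * H (σ * π)) := by rw [h2, one_mul]
    _ = sg π * (sg σ * sg π * H (σ * π)) := by ring

lemma mul_sum_sum {α β : Type*} (s : Finset α) (t : Finset β) (c : ℝ) (f : α → β → ℝ) :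
    ∑ a ∈ s, ∑ b ∈ t, c * f a b = c * ∑ a ∈ s, ∑ b ∈ t, f a b := by
  simp [Finset.mul_sum]

lemma sum_swap3 {α β γ : Type*} [Fintype α] [Fintype β] [Fintype γ]
    (F : α → β → γ → ℝ) :
    ∑ a : α, ∑ b : β, ∑ c : γ, F a b c = ∑ c : γ, ∑ a : α, ∑ b : β, F a b c := by
  calc ∑ a : α, ∑ b : β, ∑ c : γ, F a b c
      = ∑ a : α, ∑ c : γ, ∑ b : β, F a b c :=
        Finset.sum_congr rfl fun a _ => Finset.sum_comm
    _ = ∑ c : γ, ∑ a : α, ∑ b : β, F a b c := Finset.sum_comm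

def dd (i j : Fin n) : ℝ := if i = j then (1:ℝ) else 0

lemma dd_symm (i j : Fin n) : dd i j = dd j i := by simp [dd, eq_comm]

lemma sum_mul_dd (b : Fin n) (f : Fin n → ℝ) :
    ∑ i : Fin n, f i * dd i b = f b := by
  simp [dd]

def DD {p : ℕ} (I J : Fin p → Fin n) : ℝ :=
  ∑ σ : Perm (Fin p), sg σ * ∏ i, dd (I (σ i)) (J i)

def SS {p : ℕ} (θ : Fin n → Fin n → ℝ) (I J : Fin (p+1) → Fin n) : ℝ :=
  ∑ σ : Perm (Fin (p+1)), sg σ *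
    ∑ m, θ (I (σ m)) (J m) * ∏ j ∈ univ.erase m, dd (I (σ j)) (J j)

def hat {p : ℕ} (ρ : Perm (Fin p)) : Perm (Fin (p+1)) :=
  finSumFinEquiv.permCongr (Perm.sumCongr ρ 1)

lemma hat_castAdd {p : ℕ} (ρ : Perm (Fin p)) (i : Fin p) :
    hat ρ (Fin.castAdd 1 i) = Fin.castAdd 1 (ρ i) := by
  simp [hat, Equiv.permCongr_apply, finSumFinEquiv_symm_apply_castAdd]

lemma hat_natAdd {p : ℕ} (ρ : Perm (Fin p)) (x : Fin 1) :
    hat ρ (Fin.natAdd p x) = Fin.natAdd p x := by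
  simp [hat, Equiv.permCongr_apply, finSumFinEquiv_symm_apply_natAdd]

lemma sg_hat {p : ℕ} (ρ : Perm (Fin p)) : sg (hat ρ) = sg ρ := by
  rw [hat, sg, Equiv.Perm.sign_permCongr, Equiv.Perm.sign_sumCongr]; simp [sg]

lemma perm_sum_eval {p : ℕ} (G g : Fin (p+1) → ℝ) :
    ∑ τ : Perm (Fin (p+1)), G (τ (Fin.natAdd p 0)) * ∏ i : Fin p, g (τ (Fin.castAdd 1 i))
      = (p.factorial : ℝ) * ∑ m : Fin (p+1), G m * ∏ j ∈ univ.erase m, g j := by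
  classical
  set l : Fin (p+1) := Fin.natAdd p 0 with hl
  have hlast : l = Fin.last p := by ext; simp [hl]
  set e : Perm (Fin (p+1)) := Equiv.swap 0 l with he
  set EE : Fin (p+1) × Perm (Fin p) ≃ Perm (Fin (p+1)) :=
    Equiv.Perm.decomposeFin.symm.trans (Equiv.mulRight e) with hEE
  rw [← Equiv.sum_comp EE (fun τ => G (τ l) * ∏ i : Fin p, g (τ (Fin.castAdd 1 i)))]
  have hEEapp : ∀ x : Fin (p+1) × Perm (Fin p), EE x = Equiv.Perm.decomposeFin.symm x * e := by
    intro x; rfl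
  have hval : ∀ (m : Fin (p+1)) (ρ : Perm (Fin p)),
      (Equiv.Perm.decomposeFin.symm (m, ρ) * e) l = m := by
    intro m ρ
    rw [Perm.mul_apply, he]
    rw [Equiv.swap_apply_right]
    exact Equiv.Perm.decomposeFin_symm_apply_zero m ρ
  have hprod : ∀ (m : Fin (p+1)) (ρ : Perm (Fin p)),
      (∏ i : Fin p, g ((Equiv.Perm.decomposeFin.symm (m, ρ) * e) (Fin.castAdd 1 i)))
        = ∏ j ∈ univ.erase m, g j := by
    intro m ρ
    set τ : Perm (Fin (p+1)) := Equiv.Perm.decomposeFin.symm (m, ρ) * e with hτ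
    have hτl : τ l = m := hval m ρ
    refine Finset.prod_bij (fun i _ => τ (Fin.castAdd 1 i)) ?_ ?_ ?_ ?_
    · intro a _
      refine Finset.mem_erase.2 ⟨?_, Finset.mem_univ _⟩
      intro hcontra
      have : Fin.castAdd 1 a = l := τ.injective (by rw [hcontra, hτl])
      rw [hlast] at this
      exact (Fin.castSucc_lt_last a).ne this
    · intro a₁ _ a₂ _ hh
      have := τ.injective hh
      exact Fin.castSucc_injective p this
    · intro b hb
      have hbm : b ≠ m := (Finset.mem_erase.1 hb).1
      have hyl : τ⁻¹ b ≠ l := by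
        intro hc
        apply hbm
        rw [← hτl, ← hc, Perm.coe_inv, Equiv.apply_symm_apply]
      rw [hlast] at hyl
      obtain ⟨a, ha⟩ := Fin.eq_castSucc_of_ne_last hyl
      refine ⟨a, Finset.mem_univ a, ?_⟩
      have h2 : Fin.castAdd 1 a = τ⁻¹ b := ha
      rw [h2, Perm.coe_inv, Equiv.apply_symm_apply]
    · intro a _; rfl
  calc ∑ x : Fin (p+1) × Perm (Fin p),
        G ((EE x) l) * ∏ i : Fin p, g ((EE x) (Fin.castAdd 1 i))
      = ∑ m : Fin (p+1), ∑ ρ : Perm (Fin p), G m * ∏ j ∈ univ.erase m, g j := by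
        rw [Fintype.sum_prod_type]
        refine Finset.sum_congr rfl fun m _ => Finset.sum_congr rfl fun ρ _ => ?_
        rw [hEEapp, hval, hprod]
    _ = (p.factorial : ℝ) * ∑ m : Fin (p+1), G m * ∏ j ∈ univ.erase m, g j := by
        simp only [Finset.sum_const, card_univ, Fintype.card_perm, Fintype.card_fin,
          nsmul_eq_mul, Finset.mul_sum]

end DFormAux

end Aux

noncomputable section Aux2
open Equiv Finset
namespace DFormAux

variable {n : ℕ}

lemma mulE {p : ℕ}
    (hg : ∀ I J : Fin p → Fin n, DForm.gpow (n := n) p I J = (p.factorial : ℝ) * DD I J)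
    (θ : Fin n → Fin n → ℝ) (I J : Fin (p+1) → Fin n) :
    DForm.mul (DForm.gpow (n := n) p) (DForm.ofBilin θ) I J
      = (p.factorial : ℝ) * SS θ I J := by
  classical
  have expand : DForm.mul (DForm.gpow (n := n) p) (DForm.ofBilin θ) I J
      = (((p.factorial * p.factorial : ℕ)) : ℝ)⁻¹ *
        ∑ σ : Perm (Fin (p+1)), ∑ τ : Perm (Fin (p+1)),
          sg σ * sg τ *
            ((p.factorial : ℝ) * ∑ ρ : Perm (Fin p), sg ρ *
              ∏ i : Fin p, dd (I (σ (Fin.castAdd 1 (ρ i)))) (J (τ (Fin.castAdd 1 i)))) *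
            θ (I (σ (Fin.natAdd p 0))) (J (τ (Fin.natAdd p 0))) := by
    simp only [DForm.mul, DForm.ofBilin, Nat.factorial, Nat.mul_one, mul_one]
    congr 1
    refine Finset.sum_congr rfl fun σ _ => Finset.sum_congr rfl fun τ _ => ?_
    rw [hg]
    simp only [DD, sg_eq]
  rw [expand]
  -- Step 1: flatten, absorb ρ into σ
  have step1 : ∀ (σ τ : Perm (Fin (p+1))),
      sg σ * sg τ *
        ((p.factorial : ℝ) * ∑ ρ : Perm (Fin p), sg ρ *
          ∏ i : Fin p, dd (I (σ (Fin.castAdd 1 (ρ i)))) (J (τ (Fin.castAdd 1 i)))) *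
        θ (I (σ (Fin.natAdd p 0))) (J (τ (Fin.natAdd p 0)))
      = (p.factorial : ℝ) * ∑ ρ : Perm (Fin p), sg ρ *
          (sg σ * ((∏ i : Fin p, dd (I (σ (Fin.castAdd 1 (ρ i)))) (J (τ (Fin.castAdd 1 i)))) *
            (sg τ * θ (I (σ (Fin.natAdd p 0))) (J (τ (Fin.natAdd p 0)))))) := by
    intro σ τ
    simp only [Finset.mul_sum, Finset.sum_mul]
    exact Finset.sum_congr rfl fun ρ _ => by ring
  have e1 : (∑ σ : Perm (Fin (p+1)), ∑ τ : Perm (Fin (p+1)),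
      sg σ * sg τ *
        ((p.factorial : ℝ) * ∑ ρ : Perm (Fin p), sg ρ *
          ∏ i : Fin p, dd (I (σ (Fin.castAdd 1 (ρ i)))) (J (τ (Fin.castAdd 1 i)))) *
        θ (I (σ (Fin.natAdd p 0))) (J (τ (Fin.natAdd p 0))))
      = (p.factorial : ℝ) * ∑ τ : Perm (Fin (p+1)), ∑ ρ : Perm (Fin p), sg ρ *
          ∑ σ : Perm (Fin (p+1)), sg σ *
            ((∏ i : Fin p, dd (I (σ (Fin.castAdd 1 (ρ i)))) (J (τ (Fin.castAdd 1 i)))) *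
              (sg τ * θ (I (σ (Fin.natAdd p 0))) (J (τ (Fin.natAdd p 0))))) := by
    simp only [step1]
    rw [mul_sum_sum]
    congr 1
    rw [Finset.sum_comm]
    refine Finset.sum_congr rfl fun τ _ => ?_
    rw [Finset.sum_comm]
    simp only [Finset.mul_sum]
  rw [e1]
  -- Step 2: absorb ρ via hat
  have absorb : ∀ (τ : Perm (Fin (p+1))) (ρ : Perm (Fin p)),
      (∑ σ : Perm (Fin (p+1)), sg σ *
        ((∏ i : Fin p, dd (I (σ (Fin.castAdd 1 (ρ i)))) (J (τ (Fin.castAdd 1 i)))) *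
          (sg τ * θ (I (σ (Fin.natAdd p 0))) (J (τ (Fin.natAdd p 0))))))
      = sg ρ * ∑ σ : Perm (Fin (p+1)), sg σ *
          ((∏ i : Fin p, dd (I (σ (Fin.castAdd 1 i))) (J (τ (Fin.castAdd 1 i)))) *
            (sg τ * θ (I (σ (Fin.natAdd p 0))) (J (τ (Fin.natAdd p 0))))) := by
    intro τ ρ
    have key := sum_sign_mulRight (hat ρ)
      (fun σ' => (∏ i : Fin p, dd (I (σ' (Fin.castAdd 1 i))) (J (τ (Fin.castAdd 1 i)))) *
        (sg τ * θ (I (σ' (Fin.natAdd p 0))) (J (τ (Fin.natAdd p 0)))))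
    rw [sg_hat] at key
    rw [← key]
    refine Finset.sum_congr rfl fun σ _ => ?_
    simp only [Perm.mul_apply, hat_castAdd, hat_natAdd]
  have e2 : (∑ τ : Perm (Fin (p+1)), ∑ ρ : Perm (Fin p), sg ρ *
        ∑ σ : Perm (Fin (p+1)), sg σ *
          ((∏ i : Fin p, dd (I (σ (Fin.castAdd 1 (ρ i)))) (J (τ (Fin.castAdd 1 i)))) *
            (sg τ * θ (I (σ (Fin.natAdd p 0))) (J (τ (Fin.natAdd p 0))))))
      = (p.factorial : ℝ) * ∑ τ : Perm (Fin (p+1)),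
          ∑ σ : Perm (Fin (p+1)), sg σ *
            ((∏ i : Fin p, dd (I (σ (Fin.castAdd 1 i))) (J (τ (Fin.castAdd 1 i)))) *
              (sg τ * θ (I (σ (Fin.natAdd p 0))) (J (τ (Fin.natAdd p 0))))) := by
    rw [Finset.mul_sum]
    refine Finset.sum_congr rfl fun τ _ => ?_
    rw [Finset.sum_congr rfl fun ρ _ => by rw [absorb τ ρ]]
    have : ∀ ρ : Perm (Fin p), sg ρ * (sg ρ * (∑ σ : Perm (Fin (p+1)), sg σ *
        ((∏ i : Fin p, dd (I (σ (Fin.castAdd 1 i))) (J (τ (Fin.castAdd 1 i)))) *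
          (sg τ * θ (I (σ (Fin.natAdd p 0))) (J (τ (Fin.natAdd p 0)))))))
        = (∑ σ : Perm (Fin (p+1)), sg σ *
        ((∏ i : Fin p, dd (I (σ (Fin.castAdd 1 i))) (J (τ (Fin.castAdd 1 i)))) *
          (sg τ * θ (I (σ (Fin.natAdd p 0))) (J (τ (Fin.natAdd p 0)))))) := by
      intro ρ
      rw [← mul_assoc, sg_sq, one_mul]
    rw [Finset.sum_congr rfl fun ρ _ => this ρ]
    simp only [Finset.sum_const, card_univ, Fintype.card_perm, Fintype.card_fin, nsmul_eq_mul]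
  rw [e2]
  -- Step 3: substitute σ ↦ μ ∘ τ
  have subst : ∀ τ : Perm (Fin (p+1)),
      (∑ σ : Perm (Fin (p+1)), sg σ *
        ((∏ i : Fin p, dd (I (σ (Fin.castAdd 1 i))) (J (τ (Fin.castAdd 1 i)))) *
          (sg τ * θ (I (σ (Fin.natAdd p 0))) (J (τ (Fin.natAdd p 0))))))
      = ∑ μ : Perm (Fin (p+1)), sg μ *
          ((∏ i : Fin p, dd (I (μ (τ (Fin.castAdd 1 i)))) (J (τ (Fin.castAdd 1 i)))) *
            θ (I (μ (τ (Fin.natAdd p 0)))) (J (τ (Fin.natAdd p 0)))) := by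
    intro τ
    have key := sum_sign_mulRight (τ⁻¹)
      (fun μ => sg τ * ((∏ i : Fin p, dd (I (μ (τ (Fin.castAdd 1 i)))) (J (τ (Fin.castAdd 1 i)))) *
        θ (I (μ (τ (Fin.natAdd p 0)))) (J (τ (Fin.natAdd p 0)))))
    rw [sg_inv] at key
    have lhs_eq : (∑ σ : Perm (Fin (p+1)), sg σ *
        ((∏ i : Fin p, dd (I (σ (Fin.castAdd 1 i))) (J (τ (Fin.castAdd 1 i)))) *
          (sg τ * θ (I (σ (Fin.natAdd p 0))) (J (τ (Fin.natAdd p 0))))))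
        = ∑ σ : Perm (Fin (p+1)), sg σ *
            (sg τ * ((∏ i : Fin p, dd (I ((σ * τ⁻¹) (τ (Fin.castAdd 1 i)))) (J (τ (Fin.castAdd 1 i)))) *
              θ (I ((σ * τ⁻¹) (τ (Fin.natAdd p 0)))) (J (τ (Fin.natAdd p 0))))) := by
      refine Finset.sum_congr rfl fun σ _ => ?_
      simp only [Perm.mul_apply, Perm.coe_inv, Equiv.symm_apply_apply]
      ring
    rw [lhs_eq, key, Finset.mul_sum]
    refine Finset.sum_congr rfl fun μ _ => ?_
    have := sg_sq τ
    calc sg τ * (sg μ * (sg τ * ((∏ i : Fin p, dd (I (μ (τ (Fin.castAdd 1 i)))) (J (τ (Fin.castAdd 1 i)))) *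
            θ (I (μ (τ (Fin.natAdd p 0)))) (J (τ (Fin.natAdd p 0))))))
        = (sg τ * sg τ) * (sg μ * ((∏ i : Fin p, dd (I (μ (τ (Fin.castAdd 1 i)))) (J (τ (Fin.castAdd 1 i)))) *
            θ (I (μ (τ (Fin.natAdd p 0)))) (J (τ (Fin.natAdd p 0))))) := by ring
      _ = sg μ * ((∏ i : Fin p, dd (I (μ (τ (Fin.castAdd 1 i)))) (J (τ (Fin.castAdd 1 i)))) *
            θ (I (μ (τ (Fin.natAdd p 0)))) (J (τ (Fin.natAdd p 0)))) := by rw [this, one_mul]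
  rw [Finset.sum_congr rfl fun τ _ => subst τ]
  -- Step 4: swap sums and evaluate via perm_sum_eval
  rw [Finset.sum_comm]
  have e3 : ∀ μ : Perm (Fin (p+1)),
      (∑ τ : Perm (Fin (p+1)), sg μ *
        ((∏ i : Fin p, dd (I (μ (τ (Fin.castAdd 1 i)))) (J (τ (Fin.castAdd 1 i)))) *
          θ (I (μ (τ (Fin.natAdd p 0)))) (J (τ (Fin.natAdd p 0)))))
      = (p.factorial : ℝ) * (sg μ * ∑ m : Fin (p+1), θ (I (μ m)) (J m) *
          ∏ j ∈ univ.erase m, dd (I (μ j)) (J j)) := by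
    intro μ
    rw [← Finset.mul_sum]
    have := perm_sum_eval (p := p) (fun m => θ (I (μ m)) (J m)) (fun j => dd (I (μ j)) (J j))
    rw [show (∑ τ : Perm (Fin (p+1)),
        ((∏ i : Fin p, dd (I (μ (τ (Fin.castAdd 1 i)))) (J (τ (Fin.castAdd 1 i)))) *
          θ (I (μ (τ (Fin.natAdd p 0)))) (J (τ (Fin.natAdd p 0)))))
        = ∑ τ : Perm (Fin (p+1)), (fun m => θ (I (μ m)) (J m)) (τ (Fin.natAdd p 0)) *
            ∏ i : Fin p, (fun j => dd (I (μ j)) (J j)) (τ (Fin.castAdd 1 i))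
      from Finset.sum_congr rfl fun τ _ => by ring, this]
    ring
  rw [Finset.sum_congr rfl fun μ _ => e3 μ]
  rw [← Finset.mul_sum]
  have hSS : (∑ μ : Perm (Fin (p+1)), sg μ * ∑ m : Fin (p+1), θ (I (μ m)) (J m) *
      ∏ j ∈ univ.erase m, dd (I (μ j)) (J j)) = SS θ I J := rfl
  rw [hSS]
  have hfac : ((p.factorial * p.factorial : ℕ) : ℝ) ≠ 0 := by
    positivity
  field_simp
  push_cast
  ring

end DFormAux
end Aux2

noncomputable section Aux3
open Equiv Finset
namespace DFormAux

variable {n : ℕ}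

lemma SS_dd {p : ℕ} (I J : Fin (p+1) → Fin n) :
    SS dd I J = ((p : ℝ) + 1) * DD I J := by
  rw [SS, DD, Finset.mul_sum]
  refine Finset.sum_congr rfl fun σ _ => ?_
  have : ∀ m : Fin (p+1),
      dd (I (σ m)) (J m) * ∏ j ∈ univ.erase m, dd (I (σ j)) (J j)
        = ∏ j, dd (I (σ j)) (J j) :=
    fun m => Finset.mul_prod_erase univ (fun j => dd (I (σ j)) (J j)) (Finset.mem_univ m)
  rw [Finset.sum_congr rfl fun m _ => this m]
  rw [Finset.sum_const, card_univ, Fintype.card_fin, nsmul_eq_mul]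
  push_cast
  ring

lemma gpow_eq : ∀ (p : ℕ) (I J : Fin p → Fin n),
    DForm.gpow (n := n) p I J = (p.factorial : ℝ) * DD I J := by
  intro p
  induction p with
  | zero =>
      intro I J
      simp [DForm.gpow, DD, sg]
  | succ p ih =>
      intro I J
      have h1 : DForm.gpow (n := n) (p+1) I J
          = DForm.mul (DForm.gpow p) (DForm.ofBilin dd) I J := rfl
      rw [h1, mulE ih dd I J, SS_dd]
      rw [Nat.factorial_succ]
      push_cast
      ring

lemma DD_update1 {p : ℕ} (h : Fin n → Fin n → ℝ) (I J : Fin (p+1) → Fin n) :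
    ∑ k : Fin (p+1), ∑ i : Fin n, h (I k) i * DD (Function.update I k i) J = SS h I J := by
  classical
  simp only [DD, SS]
  have swap1 : ∑ k : Fin (p+1), ∑ i : Fin n, h (I k) i *
      ∑ σ : Perm (Fin (p+1)), sg σ * ∏ j, dd (Function.update I k i (σ j)) (J j)
      = ∑ σ : Perm (Fin (p+1)), sg σ * ∑ k : Fin (p+1), ∑ i : Fin n, h (I k) i *
          ∏ j, dd (Function.update I k i (σ j)) (J j) := by
    simp only [Finset.mul_sum]
    rw [sum_swap3 (fun k i σ => h (I k) i *
      (sg σ * ∏ j, dd (Function.update I k i (σ j)) (J j)))]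
    exact Finset.sum_congr rfl fun σ _ => Finset.sum_congr rfl fun k _ =>
      Finset.sum_congr rfl fun i _ => by ring
  rw [swap1]
  refine Finset.sum_congr rfl fun σ _ => ?_
  congr 1
  have hsplit : ∀ (k : Fin (p+1)) (i : Fin n),
      (∏ j, dd (Function.update I k i (σ j)) (J j))
        = dd i (J (σ⁻¹ k)) * ∏ j ∈ univ.erase (σ⁻¹ k), dd (I (σ j)) (J j) := by
    intro k i
    rw [← Finset.mul_prod_erase univ _ (Finset.mem_univ (σ⁻¹ k))]
    congr 1
    · rw [Perm.coe_inv, Equiv.apply_symm_apply, Function.update_self]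
    · refine Finset.prod_congr rfl fun j hj => ?_
      have hjk : σ j ≠ k := by
        intro hc
        exact (Finset.mem_erase.1 hj).1 (by rw [← hc, Perm.coe_inv, Equiv.symm_apply_apply])
      rw [Function.update_of_ne hjk]
  calc ∑ k : Fin (p+1), ∑ i : Fin n, h (I k) i *
        ∏ j, dd (Function.update I k i (σ j)) (J j)
      = ∑ k : Fin (p+1), h (I k) (J (σ⁻¹ k)) *
          ∏ j ∈ univ.erase (σ⁻¹ k), dd (I (σ j)) (J j) := by
        refine Finset.sum_congr rfl fun k _ => ?_
        simp only [hsplit]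
        calc ∑ i : Fin n, h (I k) i *
              (dd i (J (σ⁻¹ k)) * ∏ j ∈ univ.erase (σ⁻¹ k), dd (I (σ j)) (J j))
            = (∑ i : Fin n, h (I k) i * dd i (J (σ⁻¹ k))) *
                ∏ j ∈ univ.erase (σ⁻¹ k), dd (I (σ j)) (J j) := by
              rw [Finset.sum_mul]
              exact Finset.sum_congr rfl fun i _ => by ring
          _ = h (I k) (J (σ⁻¹ k)) * ∏ j ∈ univ.erase (σ⁻¹ k), dd (I (σ j)) (J j) := by
              rw [sum_mul_dd]
    _ = ∑ m : Fin (p+1), h (I (σ m)) (J m) * ∏ j ∈ univ.erase m, dd (I (σ j)) (J j) := by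
        rw [← Equiv.sum_comp (σ⁻¹ : Perm (Fin (p+1)))
          (fun m => h (I (σ m)) (J m) * ∏ j ∈ univ.erase m, dd (I (σ j)) (J j))]
        refine Finset.sum_congr rfl fun k _ => ?_
        rw [Perm.coe_inv, Equiv.apply_symm_apply]

lemma DD_update2 {p : ℕ} (h : Fin n → Fin n → ℝ) (hsymm : ∀ i j, h i j = h j i)
    (I J : Fin (p+1) → Fin n) :
    ∑ k : Fin (p+1), ∑ i : Fin n, h (J k) i * DD I (Function.update J k i) = SS h I J := by
  classical
  simp only [DD, SS]
  have swap1 : ∑ k : Fin (p+1), ∑ i : Fin n, h (J k) i *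
      ∑ σ : Perm (Fin (p+1)), sg σ * ∏ j, dd (I (σ j)) (Function.update J k i j)
      = ∑ σ : Perm (Fin (p+1)), sg σ * ∑ k : Fin (p+1), ∑ i : Fin n, h (J k) i *
          ∏ j, dd (I (σ j)) (Function.update J k i j) := by
    simp only [Finset.mul_sum]
    rw [sum_swap3 (fun k i σ => h (J k) i *
      (sg σ * ∏ j, dd (I (σ j)) (Function.update J k i j)))]
    exact Finset.sum_congr rfl fun σ _ => Finset.sum_congr rfl fun k _ =>
      Finset.sum_congr rfl fun i _ => by ring
  rw [swap1]
  refine Finset.sum_congr rfl fun σ _ => ?_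
  congr 1
  have hsplit : ∀ (k : Fin (p+1)) (i : Fin n),
      (∏ j, dd (I (σ j)) (Function.update J k i j))
        = dd (I (σ k)) i * ∏ j ∈ univ.erase k, dd (I (σ j)) (J j) := by
    intro k i
    rw [← Finset.mul_prod_erase univ _ (Finset.mem_univ k)]
    congr 1
    · rw [Function.update_self]
    · refine Finset.prod_congr rfl fun j hj => ?_
      rw [Function.update_of_ne (Finset.mem_erase.1 hj).1]
  refine Finset.sum_congr rfl fun k _ => ?_
  simp only [hsplit]
  calc ∑ i : Fin n, h (J k) i *
        (dd (I (σ k)) i * ∏ j ∈ univ.erase k, dd (I (σ j)) (J j))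
      = (∑ i : Fin n, h (J k) i * dd i (I (σ k))) *
          ∏ j ∈ univ.erase k, dd (I (σ j)) (J j) := by
        rw [Finset.sum_mul]
        refine Finset.sum_congr rfl fun i _ => ?_
        rw [dd_symm]
        ring
    _ = h (I (σ k)) (J k) * ∏ j ∈ univ.erase k, dd (I (σ j)) (J j) := by
        rw [sum_mul_dd, hsymm]

end DFormAux
end Aux3

/-- For a symmetric bilinear form `h` and `p ≥ 1` (written `p+1`),
`F_h(g^p) = 2p·g^{p-1}·h` in the ring of double forms. -/
theorem Fh_gpow {n p : ℕ} (h : Fin n → Fin n → ℝ)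
    (hsymm : ∀ i j, h i j = h j i) :
    ∀ I J, DForm.Fh h (DForm.gpow (n := n) (p + 1)) I J =
      2 * ((p : ℝ) + 1) * DForm.mul (DForm.gpow p) (DForm.ofBilin h) I J := by
  classical
  intro I J
  simp only [DForm.Fh]
  have hg := DFormAux.gpow_eq (n := n) (p+1)
  have l1 : ∑ k : Fin (p+1), ∑ i : Fin n,
      h (I k) i * DForm.gpow (n := n) (p+1) (Function.update I k i) J
      = (((p+1).factorial : ℕ) : ℝ) * DFormAux.SS h I J := by
    simp only [hg]
    calc ∑ k : Fin (p+1), ∑ i : Fin n, h (I k) i *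
          ((((p+1).factorial : ℕ) : ℝ) * DFormAux.DD (Function.update I k i) J)
        = (((p+1).factorial : ℕ) : ℝ) * ∑ k : Fin (p+1), ∑ i : Fin n,
            h (I k) i * DFormAux.DD (Function.update I k i) J := by
          have hre : ∀ (k : Fin (p+1)) (i : Fin n),
              h (I k) i * ((((p+1).factorial : ℕ) : ℝ) * DFormAux.DD (Function.update I k i) J)
                = (((p+1).factorial : ℕ) : ℝ) * (h (I k) i * DFormAux.DD (Function.update I k i) J) :=
            fun k i => by ring
          simp only [hre]
          rw [DFormAux.mul_sum_sum]
      _ = (((p+1).factorial : ℕ) : ℝ) * DFormAux.SS h I J := by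
          rw [DFormAux.DD_update1 h I J]
  have l2 : ∑ k : Fin (p+1), ∑ i : Fin n,
      h (J k) i * DForm.gpow (n := n) (p+1) I (Function.update J k i)
      = (((p+1).factorial : ℕ) : ℝ) * DFormAux.SS h I J := by
    simp only [hg]
    calc ∑ k : Fin (p+1), ∑ i : Fin n, h (J k) i *
          ((((p+1).factorial : ℕ) : ℝ) * DFormAux.DD I (Function.update J k i))
        = (((p+1).factorial : ℕ) : ℝ) * ∑ k : Fin (p+1), ∑ i : Fin n,
            h (J k) i * DFormAux.DD I (Function.update J k i) := by
          have hre : ∀ (k : Fin (p+1)) (i : Fin n),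
              h (J k) i * ((((p+1).factorial : ℕ) : ℝ) * DFormAux.DD I (Function.update J k i))
                = (((p+1).factorial : ℕ) : ℝ) * (h (J k) i * DFormAux.DD I (Function.update J k i)) :=
            fun k i => by ring
          simp only [hre]
          rw [DFormAux.mul_sum_sum]
      _ = (((p+1).factorial : ℕ) : ℝ) * DFormAux.SS h I J := by
          rw [DFormAux.DD_update2 h hsymm I J]
  rw [l1, l2, DFormAux.mulE (DFormAux.gpow_eq (n := n) p) h I J]
  rw [Nat.factorial_succ]
  push_cast
  ring
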